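/- For positive reals σs², σ1², σ2², define D1* = σs²(σ1²+σ2²)/(σs²+σ1²+σ2²). If 0 < D2 ≤ D1 and D2 ≤ D1·σ2²·(σ1²+σ2²−D1)/(σ1²·D1+σ2²·(σ1²+σ2²)) with D1·σ2²/(σs²+σ2²) ≤ D2, then (1/2)·log(σs²(σ2²·D1+σ1²·D2)/(D1·D2·(σs²+σ1²+σ2²))) ≤ (1/2)·log(σs²·σ1²·σ2²/(D2·(σs²+σ1²+σ2²)·((1−γ)²·D1+γ·σ1²))), where γ = σ2²/(σ1²+σ2²). That is, the separation-based rate is at most the uncoded rate in this regime. -/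

import Mathlib

open Real

/-- Separation-based rate is at most the uncoded rate in the regime
`D̃₂* ≤ D₂ ≤ D₁σ₂²(σ₁²+σ₂²−D₁)/(σ₁²D₁+σ₂²(σ₁²+σ₂²))`. Logs base 2. -/
theorem stmt0 (σs2 σ12 σ22 D1 D2 : ℝ)
    (hσs : 0 < σs2) (hσ1 : 0 < σ12) (hσ2 : 0 < σ22)
    (hD2pos : 0 < D2) (hD21 : D2 ≤ D1)
    (hlow : D1 * σ22 / (σs2 + σ22) ≤ D2)
    (hup : D2 ≤ D1 * σ22 * (σ12 + σ22 - D1) / (σ12 * D1 + σ22 * (σ12 + σ22))) :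
    (1/2) * logb 2 (σs2 * (σ22 * D1 + σ12 * D2) / (D1 * D2 * (σs2 + σ12 + σ22)))
      ≤ (1/2) * logb 2 (σs2 * σ12 * σ22 /
          (D2 * (σs2 + σ12 + σ22) *
            ((1 - σ22 / (σ12 + σ22))^2 * D1 + (σ22 / (σ12 + σ22)) * σ12))) := by
  have hD1 : 0 < D1 := lt_of_lt_of_le hD2pos hD21
  have hS : 0 < σs2 + σ12 + σ22 := by positivity
  have hσ : 0 < σ12 + σ22 := by positivity
  have hup' : D2 * (σ12 * D1 + σ22 * (σ12 + σ22)) ≤ D1 * σ22 * (σ12 + σ22 - D1) := by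
    have hden : 0 < σ12 * D1 + σ22 * (σ12 + σ22) := by positivity
    exact (le_div_iff₀ hden).mp hup
  have hB : 0 < (1 - σ22 / (σ12 + σ22))^2 * D1 + (σ22 / (σ12 + σ22)) * σ12 := by
    have : 0 < (σ22 / (σ12 + σ22)) * σ12 := by positivity
    nlinarith [sq_nonneg (1 - σ22 / (σ12 + σ22))]
  have hnum : 0 < σs2 * (σ22 * D1 + σ12 * D2) := by positivity
  have hd1 : 0 < D1 * D2 * (σs2 + σ12 + σ22) := by positivity
  have hd2 : 0 < D2 * (σs2 + σ12 + σ22) *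
      ((1 - σ22 / (σ12 + σ22))^2 * D1 + (σ22 / (σ12 + σ22)) * σ12) := by positivity
  have hmain : σs2 * (σ22 * D1 + σ12 * D2) / (D1 * D2 * (σs2 + σ12 + σ22))
      ≤ σs2 * σ12 * σ22 /
        (D2 * (σs2 + σ12 + σ22) *
          ((1 - σ22 / (σ12 + σ22))^2 * D1 + (σ22 / (σ12 + σ22)) * σ12)) := by
    rw [div_le_div_iff₀ hd1 hd2]
    have h1 : (1 - σ22 / (σ12 + σ22)) = σ12 / (σ12 + σ22) := by
      field_simp
      ring
    rw [h1]
    have hne : (σ12 + σ22) ≠ 0 := ne_of_gt hσ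
    field_simp
    nlinarith [mul_le_mul_of_nonneg_left hup'
      (by positivity : (0:ℝ) ≤ σs2 * (σs2 + σ12 + σ22) * σ12 * σ12 * (σ12 + σ22))]
  have hlog := Real.logb_le_logb_of_le (b := 2) (by norm_num : (1:ℝ) < 2) (div_pos hnum hd1) hmain
  linarith
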